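/- The thresholds of a canonically represented disjunctive hierarchical game are unique: if two disjunctive hierarchical games on the same partition P = P_1∪...∪P_m (|P_i| = n_i), with threshold sequences k_1<...<k_m and k'_1<...<k'_m, both satisfy k_1 ≤ n_1, k_i < k_{i-1}+n_i for 1<i<m, k_m < k_{m-1}+n_m (and likewise for k'), and they have the same winning coalitions, then k_i = k'_i for all i. -/

import Mathlib

/-- Cumulative union `P_1 ∪ ... ∪ P_i` of the first `i` (1-indexed) levels. -/
def cumUnion {α : Type*} [DecidableEq α] (P : ℕ → Finset α) (i : ℕ) : Finset α :=
  (Finset.Icc 1 i).biUnion P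

/-- Winning predicate of the disjunctive hierarchical game. -/
def disjWin {α : Type*} [DecidableEq α] (m : ℕ) (P : ℕ → Finset α) (k : ℕ → ℕ)
    (X : Finset α) : Prop :=
  ∃ i, 1 ≤ i ∧ i ≤ m ∧ k i ≤ (X ∩ cumUnion P i).card

lemma cumUnion_mono {α : Type*} [DecidableEq α] (P : ℕ → Finset α) {i j : ℕ}
    (h : i ≤ j) : cumUnion P i ⊆ cumUnion P j :=
  Finset.biUnion_subset_biUnion_of_subset_left _ (Finset.Icc_subset_Icc_right h)

lemma subset_cumUnion {α : Type*} [DecidableEq α] (P : ℕ → Finset α) {i : ℕ}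
    (h1 : 1 ≤ i) : P i ⊆ cumUnion P i := fun a ha =>
  Finset.mem_biUnion.2 ⟨i, Finset.mem_Icc.2 ⟨h1, le_rfl⟩, ha⟩

lemma disjoint_cumUnion {α : Type*} [DecidableEq α] {m : ℕ} {P : ℕ → Finset α}
    (hdisj : ∀ i j, 1 ≤ i → i < j → j ≤ m → Disjoint (P i) (P j))
    {s t : ℕ} (hst : s < t) (htm : t ≤ m) : Disjoint (cumUnion P s) (P t) := by
  rw [cumUnion, Finset.disjoint_biUnion_left]
  intro j hj
  rw [Finset.mem_Icc] at hj
  exact hdisj j t hj.1 (lt_of_le_of_lt hj.2 hst) htm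

/-- Key construction: for any `r ≤ k t` there is a coalition of size `r` inside
`cumUnion P t` meeting every lower cumulative union in fewer than `k j` players. -/
lemma build {α : Type*} [DecidableEq α] {m : ℕ} {P : ℕ → Finset α} {k : ℕ → ℕ}
    (hdisj : ∀ i j, 1 ≤ i → i < j → j ≤ m → Disjoint (P i) (P j))
    (hkpos : ∀ i, 1 ≤ i → i ≤ m → 0 < k i)
    (ha : k 1 ≤ (P 1).card)
    (hb : ∀ i, 1 < i → i ≤ m → k i < k (i - 1) + (P i).card) :
    ∀ t, 1 ≤ t → t ≤ m → ∀ r, r ≤ k t →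
      ∃ X, X ⊆ cumUnion P t ∧ X.card = r ∧
        ∀ j, 1 ≤ j → j < t → (X ∩ cumUnion P j).card < k j := by
  intro t
  induction t with
  | zero => omega
  | succ s ih =>
    intro _ hm1 r hr
    rcases Nat.eq_zero_or_pos s with hs0 | hs1
    · subst hs0
      obtain ⟨X, hXsub, hXcard⟩ := Finset.exists_subset_card_eq (s := P 1) (n := r) (hr.trans ha)
      exact ⟨X, hXsub.trans (subset_cumUnion P le_rfl), hXcard, by omega⟩
    · -- s ≥ 1, step case
      set c := (P (s + 1)).card with hc
      have hsm : s ≤ m := by omega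
      have hkb : k (s + 1) < k s + c := by
        have := hb (s + 1) (by omega) hm1
        simpa using this
      set s' := min r c with hs'
      have hr' : r - s' < k s := by
        rcases le_or_gt r c with h | h
        · have : s' = r := by omega
          have := hkpos s hs1 hsm
          omega
        · have : s' = c := by omega
          omega
      obtain ⟨Y, hYsub, hYcard⟩ := Finset.exists_subset_card_eq (s := P (s + 1)) (n := s')
        (min_le_right _ _)
      obtain ⟨X', hX'sub, hX'card, hX'low⟩ := ih hs1 hsm (r - s') (le_of_lt hr')
      have hdYX : Disjoint X' Y :=
        ((disjoint_cumUnion hdisj (Nat.lt_succ_self s) hm1).mono hX'sub hYsub)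
      refine ⟨X' ∪ Y, ?_, ?_, ?_⟩
      · exact Finset.union_subset
          (hX'sub.trans (cumUnion_mono P (Nat.le_succ s)))
          (hYsub.trans (subset_cumUnion P (by omega)))
      · rw [Finset.card_union_of_disjoint hdYX, hX'card, hYcard]
        omega
      · intro j hj1 hjs
        have hYdisj : Disjoint Y (cumUnion P j) := by
          have : Disjoint (cumUnion P j) (P (s + 1)) :=
            disjoint_cumUnion hdisj (by omega) hm1
          exact (Finset.disjoint_of_subset_left hYsub this.symm)
        have hinter : (X' ∪ Y) ∩ cumUnion P j = X' ∩ cumUnion P j := by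
          rw [Finset.union_inter_distrib_right,
            Finset.disjoint_iff_inter_eq_empty.1 hYdisj, Finset.union_empty]
        rw [hinter]
        rcases eq_or_lt_of_le (Nat.lt_succ_iff.1 hjs) with hje | hjlt
        · subst hje
          have : X' ∩ cumUnion P j = X' := Finset.inter_eq_left.2 hX'sub
          rw [this, hX'card]; exact hr'
        · exact hX'low j hj1 hjlt

/-- One-sided comparison: if the `k`-game's winning sets are among the `k'`-game's
and the thresholds agree below `i`, then `k i` is not smaller than... rather
`¬ k i < k' i`. -/
lemma keyStep {α : Type*} [DecidableEq α] {m : ℕ} {P : ℕ → Finset α} {k k' : ℕ → ℕ}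
    (hdisj : ∀ i j, 1 ≤ i → i < j → j ≤ m → Disjoint (P i) (P j))
    (hkpos : ∀ i, 1 ≤ i → i ≤ m → 0 < k i)
    (ha : k 1 ≤ (P 1).card)
    (hb : ∀ i, 1 < i → i ≤ m → k i < k (i - 1) + (P i).card)
    (hkmono' : ∀ i j, 1 ≤ i → i < j → j ≤ m → k' i < k' j)
    (hsame : ∀ X : Finset α, disjWin m P k X → disjWin m P k' X)
    (i : ℕ) (hi1 : 1 ≤ i) (him : i ≤ m)
    (heq : ∀ j, 1 ≤ j → j < i → k j = k' j) :
    ¬ k i < k' i := by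
  intro hlt
  obtain ⟨X, hXsub, hXcard, hXlow⟩ :=
    build hdisj hkpos ha hb i hi1 him (k i) le_rfl
  have hwin : disjWin m P k X := by
    refine ⟨i, hi1, him, ?_⟩
    rw [Finset.inter_eq_left.2 hXsub, hXcard]
  obtain ⟨j, hj1, hjm, hjw⟩ := hsame X hwin
  rcases lt_trichotomy j i with hji | hji | hji
  · have h1 := hXlow j hj1 hji
    have h2 := heq j hj1 hji
    omega
  · subst hji
    rw [Finset.inter_eq_left.2 hXsub, hXcard] at hjw
    omega
  · have hXj : X ∩ cumUnion P j = X :=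
      Finset.inter_eq_left.2 (hXsub.trans (cumUnion_mono P (le_of_lt hji)))
    rw [hXj, hXcard] at hjw
    have := hkmono' i j hi1 hji hjm
    omega

/-- the thresholds of a canonically represented disjunctive
hierarchical game are unique: two disjunctive hierarchical games on the same
partition `P = P_1 ∪ ... ∪ P_m` with threshold sequences `k`, `k'` both
satisfying `k_1 ≤ n_1` and `k_i < k_{i-1} + n_i` for `1 < i < m` as well as
`k_m < k_{m-1} + n_m` (here stated uniformly for `1 < i ≤ m`), which have the
same winning coalitions, have equal thresholds. -/
theorem stmt_7 {α : Type*} [Fintype α] [DecidableEq α]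
    (m : ℕ) (hm : 1 ≤ m) (P : ℕ → Finset α) (k k' : ℕ → ℕ)
    (hdisj : ∀ i j, 1 ≤ i → i < j → j ≤ m → Disjoint (P i) (P j))
    (hlvlne : ∀ i, 1 ≤ i → i ≤ m → (P i).Nonempty)
    (hcover : ∀ a : α, ∃ i, 1 ≤ i ∧ i ≤ m ∧ a ∈ P i)
    (hkpos : ∀ i, 1 ≤ i → i ≤ m → 0 < k i)
    (hkmono : ∀ i j, 1 ≤ i → i < j → j ≤ m → k i < k j)
    (ha : k 1 ≤ (P 1).card)
    (hb : ∀ i, 1 < i → i ≤ m → k i < k (i - 1) + (P i).card)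
    (hkpos' : ∀ i, 1 ≤ i → i ≤ m → 0 < k' i)
    (hkmono' : ∀ i j, 1 ≤ i → i < j → j ≤ m → k' i < k' j)
    (ha' : k' 1 ≤ (P 1).card)
    (hb' : ∀ i, 1 < i → i ≤ m → k' i < k' (i - 1) + (P i).card)
    (hsame : ∀ X : Finset α, disjWin m P k X ↔ disjWin m P k' X) :
    ∀ i, 1 ≤ i → i ≤ m → k i = k' i := by
  intro i
  induction i using Nat.strong_induction_on with
  | _ i ih =>
    intro hi1 him
    have heq : ∀ j, 1 ≤ j → j < i → k j = k' j := fun j hj1 hji =>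
      ih j hji hj1 (le_of_lt (lt_of_lt_of_le hji him))
    have h1 := keyStep hdisj hkpos ha hb hkmono'
      (fun X => (hsame X).1) i hi1 him heq
    have h2 := keyStep hdisj hkpos' ha' hb' hkmono
      (fun X => (hsame X).2) i hi1 him (fun j hj1 hji => (heq j hj1 hji).symm)
    omega
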